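/- arXiv:2005.08480 — 2 statements merged into one kernel-verified Lean document; each statement's English description precedes it below -/
import Mathlib

section
/- Under the noise-free click model with independent observation propensities p(x) ∈ (0,1], the expected IPS pairwise loss E_o[ Σ_{x_i : c(x_i)=1} (1/p(x_i)) Σ_{x_j : c(x_j)=0} δ(x_i, x_j) ] equals Σ_{x_i : r(x_i)=1} ( Σ_{x_j : r(x_j)=0} δ(x_i, x_j) + Σ_{x_j : r(x_j)=1} (1 − p(x_j)) δ(x_i, x_j) ), where the second inner sum ranges over relevant x_j ≠ x_i. -/
open MeasureTheory ProbabilityTheory in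
/-- Expected IPS pairwise loss. Under the noise-free click model
with independent observations,
E_o[Σ_{c(xᵢ)=1} (1/p(xᵢ)) Σ_{c(xⱼ)=0} δ(xᵢ,xⱼ)]
  = Σ_{r(xᵢ)=1} (Σ_{r(xⱼ)=0} δ(xᵢ,xⱼ) + Σ_{r(xⱼ)=1, xⱼ≠xᵢ} (1−p(xⱼ))·δ(xᵢ,xⱼ)). -/
theorem ips_pairwise_expected_loss {X Ω : Type*} [Fintype X] [DecidableEq X]
    [MeasurableSpace Ω] (μ : Measure Ω) [IsProbabilityMeasure μ]
    (o : X → Ω → Bool) (r : X → Bool) (p : X → ℝ) (δ : X → X → ℝ)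
    (hmeas : ∀ x, Measurable (o x))
    (hind : iIndepFun o μ)
    (hp : ∀ x, 0 < p x ∧ p x ≤ 1)
    (hprob : ∀ x, (μ {ω | o x ω = true}).toReal = p x)
    (hδdiag : ∀ x, δ x x = 0) :
    ∫ ω, (∑ x_i, if (o x_i ω && r x_i) = true then
        (1 / p x_i) * ∑ x_j, (if (o x_j ω && r x_j) = false then δ x_i x_j else 0)
      else 0) ∂μ
    = ∑ x_i, (if r x_i = true then
        (∑ x_j, if r x_j = false then δ x_i x_j else 0)
        + (∑ x_j ∈ Finset.univ.filter (fun x_j => r x_j = true ∧ x_j ≠ x_i),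
            (1 - p x_j) * δ x_i x_j)
      else 0) := by
  classical
  set A : X → X → Set Ω := fun i j =>
    {ω | (o i ω && r i) = true} ∩ {ω | (o j ω && r j) = false} with hAdef
  have hAmeas : ∀ i j, MeasurableSet (A i j) := by
    intro i j
    have h1 : {ω | (o i ω && r i) = true} = (o i) ⁻¹' {b | (b && r i) = true} := rfl
    have h2 : {ω | (o j ω && r j) = false} = (o j) ⁻¹' {b | (b && r j) = false} := rfl
    exact ((h1 ▸ hmeas i trivial).inter (h2 ▸ hmeas j trivial))
  have hpt : ∀ ω, (∑ x_i, if (o x_i ω && r x_i) = true then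
        (1 / p x_i) * ∑ x_j, (if (o x_j ω && r x_j) = false then δ x_i x_j else 0)
      else 0)
      = ∑ x_i, ∑ x_j, (A x_i x_j).indicator (fun _ => (1 / p x_i) * δ x_i x_j) ω := by
    intro ω
    refine Finset.sum_congr rfl fun i _ => ?_
    by_cases hc : (o i ω && r i) = true
    · rw [if_pos hc, Finset.mul_sum]
      refine Finset.sum_congr rfl fun j _ => ?_
      by_cases hd : (o j ω && r j) = false
      · rw [if_pos hd, Set.indicator_of_mem (show ω ∈ A i j from ⟨hc, hd⟩)]
      · rw [if_neg hd, Set.indicator_of_notMem (fun h => hd h.2), mul_zero]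
    · rw [if_neg hc]
      symm
      refine Finset.sum_eq_zero fun j _ => ?_
      exact Set.indicator_of_notMem (fun h => hc h.1) _
  rw [integral_congr_ae (Filter.Eventually.of_forall hpt)]
  have hint : ∀ i j : X, Integrable ((A i j).indicator
      (fun _ => (1 / p i) * δ i j : Ω → ℝ)) μ :=
    fun i j => (integrable_const _).indicator (hAmeas i j)
  rw [integral_finset_sum _ (fun i _ => integrable_finset_sum _ (fun j _ => hint i j))]
  have : ∀ i : X, ∫ ω, ∑ x_j, (A i x_j).indicator (fun _ => (1 / p i) * δ i x_j) ω ∂μ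
      = ∑ x_j, (μ (A i x_j)).toReal * ((1 / p i) * δ i x_j) := by
    intro i
    rw [integral_finset_sum _ (fun j _ => hint i j)]
    exact Finset.sum_congr rfl fun j _ => by
      rw [integral_indicator_const _ (hAmeas i j)]; simp [smul_eq_mul, Measure.real]
  simp_rw [this]
  refine Finset.sum_congr rfl fun i _ => ?_
  -- rewrite RHS for fixed i
  rw [Finset.sum_filter]
  by_cases hri : r i = true
  · rw [if_pos hri]
    rw [← Finset.sum_add_distrib]
    refine Finset.sum_congr rfl fun j _ => ?_
    by_cases hrj : r j = true
    · -- r j true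
      have hrjne : ¬ (r j = false) := by simp [hrj]
      rw [if_neg hrjne]
      by_cases hji : j = i
      · subst hji
        rw [hδdiag, mul_zero, mul_zero]
        simp
      · rw [if_pos ⟨hrj, hji⟩]
        have hA' : A i j = (o i) ⁻¹' {true} ∩ (o j) ⁻¹' {true}ᶜ := by
          ext ω; simp [hAdef, Set.mem_inter_iff, Set.mem_setOf_eq, Set.mem_preimage,
            Set.mem_singleton_iff, Set.mem_compl_iff, hri, hrj]
        have hind' : IndepFun (o i) (o j) μ := hind.indepFun (fun h => hji h.symm)
        have hμ : μ (A i j) = μ ((o i) ⁻¹' {true}) * μ ((o j) ⁻¹' {true}ᶜ) := by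
          rw [hA']
          exact hind'.measure_inter_preimage_eq_mul _ _ trivial trivial
        have hcompl : ((o j) ⁻¹' {true}ᶜ) = ((o j) ⁻¹' {true})ᶜ := by
          ext ω; simp
        have hμc : (μ ((o j) ⁻¹' {true}ᶜ)).toReal = 1 - p j := by
          rw [hcompl, prob_compl_eq_one_sub (hmeas j trivial),
            ENNReal.toReal_sub_of_le prob_le_one ENNReal.one_ne_top]
          have : ((o j) ⁻¹' {true}) = {ω | o j ω = true} := by ext ω; simp [Set.mem_preimage, Set.mem_singleton_iff, Set.mem_setOf_eq]
          rw [this, hprob j]; simp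
        have hμi : (μ ((o i) ⁻¹' {true})).toReal = p i := by
          have : ((o i) ⁻¹' {true}) = {ω | o i ω = true} := by ext ω; simp [Set.mem_preimage, Set.mem_singleton_iff, Set.mem_setOf_eq]
          rw [this, hprob i]
        rw [hμ, ENNReal.toReal_mul, hμi, hμc]
        have hpi := (hp i).1
        field_simp
        ring
    · -- r j false
      have hrjf : r j = false := by simpa using hrj
      rw [if_pos hrjf, if_neg (by simp [hrjf])]
      have hA' : A i j = (o i) ⁻¹' {true} := by
        ext ω; simp [hAdef, Set.mem_inter_iff, Set.mem_setOf_eq, Set.mem_preimage,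
          Set.mem_singleton_iff, hri, hrjf]
      have hμi : (μ (A i j)).toReal = p i := by
        rw [hA']
        have : ((o i) ⁻¹' {true}) = {ω | o i ω = true} := by ext ω; simp [Set.mem_preimage, Set.mem_singleton_iff, Set.mem_setOf_eq]
        rw [this, hprob i]
      rw [hμi]
      have hpi := (hp i).1
      field_simp
      simp
  · rw [if_neg hri]
    refine Finset.sum_eq_zero fun j _ => ?_
    have hA' : A i j = ∅ := by
      ext ω
      simp only [hAdef, Set.mem_inter_iff, Set.mem_setOf_eq, Set.mem_empty_iff_false,
        iff_false, not_and, Bool.and_eq_true]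
      rintro ⟨-, h⟩; exact absurd h hri
    rw [hA']; simp
end

section
/- Under the noisy click model where P(c(x)=1 | o(x)=1, r(x)=1) = ε₊, P(c(x)=1 | o(x)=1, r(x)=0) = ε₋ with 1 ≥ ε₊ > ε₋ ≥ 0, and clicks require observation (P(c(x)=1 | o(x)=0) = 0), the expected IPS-weighted value E[c(x)·v/p(x)] for a document x with r(x)=1 equals ε₊·v, and for r(x)=0 equals ε₋·v, where p(x)=P(o(x)=1) > 0 and v is any constant. Hence the expected IPS-weighted contribution of a relevant document strictly exceeds that of an irrelevant one whenever v > 0. -/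
open MeasureTheory

lemma noisy_click_aux {Ω : Type*} [MeasurableSpace Ω] (μ : Measure Ω)
    [IsProbabilityMeasure μ] (co oo : Ω → Bool) (hm : Measurable co)
    (px ε v : ℝ) (hpx : 0 < px)
    (hno : μ ({ω | co ω = true} ∩ {ω | oo ω = false}) = 0)
    (hc : (μ ({ω | co ω = true} ∩ {ω | oo ω = true})).toReal = ε * px) :
    ∫ ω, (if co ω = true then v / px else 0) ∂μ = ε * v := by
  have hs : MeasurableSet {ω | co ω = true} := hm (measurableSet_singleton true)
  have hμ : μ {ω | co ω = true} = μ ({ω | co ω = true} ∩ {ω | oo ω = true}) := by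
    apply le_antisymm
    · have hcover : {ω | co ω = true} ⊆
        ({ω | co ω = true} ∩ {ω | oo ω = true}) ∪
        ({ω | co ω = true} ∩ {ω | oo ω = false}) := by
        intro ω hω
        rcases Bool.eq_false_or_eq_true (oo ω) with h | h
        · exact Or.inl ⟨hω, h⟩
        · exact Or.inr ⟨hω, h⟩

      calc μ {ω | co ω = true} ≤ _ := measure_mono hcover
        _ ≤ μ ({ω | co ω = true} ∩ {ω | oo ω = true}) +
            μ ({ω | co ω = true} ∩ {ω | oo ω = false}) := measure_union_le _ _
        _ = μ ({ω | co ω = true} ∩ {ω | oo ω = true}) := by rw [hno, add_zero]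
    · exact measure_mono (Set.inter_subset_left)
  have hint : ∫ ω, (if co ω = true then v / px else 0) ∂μ
      = (v / px) * (μ {ω | co ω = true}).toReal := by
    have heq : (fun ω => if co ω = true then v / px else 0)
        = Set.indicator {ω | co ω = true} (fun _ => v / px) := by
      funext ω; simp [Set.indicator_apply, Set.mem_setOf_eq]
    rw [heq, integral_indicator_const _ hs, smul_eq_mul, mul_comm]
    rfl
  rw [hint, hμ, hc]
  field_simp

/-- Noisy click model: clicks require observation, and upon
observation a relevant document is clicked with probability ε₊ and an
irrelevant one with probability ε₋, 1 ≥ ε₊ > ε₋ ≥ 0. Then the expected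
IPS-weighted value E[c(x)·v/p(x)] equals ε₊·v for a relevant document and
ε₋·v for an irrelevant one; in particular the former strictly exceeds the
latter whenever v > 0. -/
theorem noisy_click_expected_ips_contribution {X Ω : Type*}
    [MeasurableSpace Ω] (μ : Measure Ω) [IsProbabilityMeasure μ]
    (o c : X → Ω → Bool) (r : X → Bool) (p : X → ℝ) (εp εm v : ℝ)
    (hε : 0 ≤ εm ∧ εm < εp ∧ εp ≤ 1)
    (hmeas : ∀ x, Measurable (c x))
    (hp : ∀ x, 0 < p x ∧ p x ≤ 1)
    (hprob : ∀ x, (μ {ω | o x ω = true}).toReal = p x)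
    -- clicks require observation: P(c(x)=1 ∧ o(x)=0) = 0
    (hno : ∀ x, μ ({ω | c x ω = true} ∩ {ω | o x ω = false}) = 0)
    -- P(c(x)=1 ∧ o(x)=1) = ε₊ · P(o(x)=1) for relevant x
    (hcr : ∀ x, r x = true →
      (μ ({ω | c x ω = true} ∩ {ω | o x ω = true})).toReal = εp * p x)
    -- P(c(x)=1 ∧ o(x)=1) = ε₋ · P(o(x)=1) for irrelevant x
    (hci : ∀ x, r x = false →
      (μ ({ω | c x ω = true} ∩ {ω | o x ω = true})).toReal = εm * p x) :
    (∀ x, r x = true →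
        ∫ ω, (if c x ω = true then v / p x else 0) ∂μ = εp * v)
    ∧ (∀ x, r x = false →
        ∫ ω, (if c x ω = true then v / p x else 0) ∂μ = εm * v)
    ∧ (0 < v → εm * v < εp * v) := by
  refine ⟨fun x hx => ?_, fun x hx => ?_, fun hv => ?_⟩
  · exact noisy_click_aux μ (c x) (o x) (hmeas x) (p x) εp v (hp x).1 (hno x) (hcr x hx)
  · exact noisy_click_aux μ (c x) (o x) (hmeas x) (p x) εm v (hp x).1 (hno x) (hci x hx)
  · exact mul_lt_mul_of_pos_right hε.2.1 hv
end
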